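/- Let p be a prime and let d be a prime number dividing p − 1 with d < p − 1. Let Z_d = {z ∈ 𝔽_p : z^d = 1}. If A, B ⊆ 𝔽_p are finite sets with A + B = Z_d, then A or B is a singleton (i.e., |A| = 1 or |B| = 1). -/

import Mathlib

open Pointwise Polynomial Finset

/-- Hanson–Petridis: if `A + B` lands in the `d`-th roots of unity, then `|A||B| ≤ d`. -/
private lemma hp_sumset_bound {p : ℕ} [Fact p.Prime] {d : ℕ} (hd2 : 2 ≤ d) (hdp : 2 * d < p)
    (A B : Finset (ZMod p)) (hA2 : 2 ≤ A.card) (hAd : A.card ≤ d)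
    (hroot : ∀ a ∈ A, ∀ b ∈ B, (a + b) ^ d = 1) :
    A.card * B.card ≤ d := by
  classical
  set m := A.card with hmdef
  set k := m - 1 with hkdef
  have hmk : m = k + 1 := by omega
  have hk1 : 1 ≤ k := by omega
  -- the elements of A as an injective tuple
  let e := A.equivFin
  let v : Fin m → ZMod p := fun i => ((e.symm i : A) : ZMod p)
  have hv : Function.Injective v := by
    intro i j hij
    exact e.symm.injective (Subtype.ext hij)
  have hvA : ∀ i, v i ∈ A := fun i => (e.symm i).2
  -- find a nonzero vector orthogonal to low power sums
  obtain ⟨c, hc0, hc⟩ :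
      ∃ c : Fin m → ZMod p, c ≠ 0 ∧ ∀ j : Fin k, ∑ i, c i * v i ^ (j : ℕ) = 0 := by
    let L : (Fin m → ZMod p) →ₗ[ZMod p] (Fin k → ZMod p) :=
      { toFun := fun c => fun j => ∑ i, c i * v i ^ (j : ℕ)
        map_add' := by
          intro x y; funext j; simp [add_mul, Finset.sum_add_distrib]
        map_smul' := by
          intro r x; funext j; simp [Finset.mul_sum, mul_assoc] }
    by_contra hcon
    push_neg at hcon
    have hker : ∀ c, L c = 0 → c = 0 := by
      intro c hLc
      by_contra hne
      obtain ⟨j, hj⟩ := hcon c hne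
      exact hj (congrFun hLc j)
    have hinj : Function.Injective L := by
      intro x y hxy
      have : L (x - y) = 0 := by rw [map_sub, hxy, sub_self]
      have := hker _ this
      exact sub_eq_zero.mp this
    have hle := LinearMap.finrank_le_finrank_of_injective hinj
    simp only [Module.finrank_pi, Fintype.card_fin] at hle
    omega
  have hps : ∀ t : ℕ, t < k → ∑ i, c i * v i ^ t = 0 := fun t ht => hc ⟨t, ht⟩
  set s : ZMod p := ∑ i, c i * v i ^ k with hsdef
  have hs : s ≠ 0 := by
    intro h0
    apply hc0
    apply Matrix.eq_zero_of_forall_pow_sum_mul_pow_eq_zero hv (v := c)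
    intro j
    have hjk : (j : ℕ) ≤ k := by have := j.2; omega
    rcases lt_or_eq_of_le hjk with hlt | heq
    · exact hps _ hlt
    · rw [heq]; exact h0
  -- power sums of shifted variables
  have hsum_pow : ∀ (x : ZMod p) (r : ℕ), r ≤ k →
      (∑ i, c i * (v i + x) ^ r) = if r = k then s else 0 := by
    intro x r hr
    have key : (∑ i, c i * (v i + x) ^ r)
        = ∑ t ∈ Finset.range (r + 1), (∑ i, c i * v i ^ t) * (x ^ (r - t) * (r.choose t : ZMod p)) := by
      simp_rw [add_pow, Finset.mul_sum]
      rw [Finset.sum_comm]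
      refine Finset.sum_congr rfl fun t _ => ?_
      rw [Finset.sum_mul]
      refine Finset.sum_congr rfl fun i _ => by ring
    rcases eq_or_lt_of_le hr with heq | hlt
    · rw [if_pos heq, key, Finset.sum_eq_single_of_mem r (Finset.self_mem_range_succ r)]
      · rw [heq]; simp [hsdef]
      · intro t ht htne
        have : t < k := by
          have := Finset.mem_range.mp ht; omega
        rw [hps t this, zero_mul]
    · rw [if_neg (by omega), key]
      refine Finset.sum_eq_zero fun t ht => ?_
      have : t < k := by
        have := Finset.mem_range.mp ht; omega
      rw [hps t this, zero_mul]
  set N := d + k with hNdef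
  have hNp : N < p := by omega
  -- the auxiliary polynomial
  set Q : Polynomial (ZMod p) :=
    (∑ i, Polynomial.C (c i) * (Polynomial.X + Polynomial.C (v i)) ^ N) - Polynomial.C s with hQdef
  have hQcoeff : ∀ j, Q.coeff j
      = (∑ i, c i * v i ^ (N - j)) * ((N.choose j : ZMod p)) - (if j = 0 then s else 0) := by
    intro j
    rw [hQdef, Polynomial.coeff_sub, Polynomial.finset_sum_coeff, Polynomial.coeff_C]
    congr 1
    rw [Finset.sum_mul]
    refine Finset.sum_congr rfl fun i _ => ?_
    rw [Polynomial.coeff_C_mul, Polynomial.coeff_X_add_C_pow]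
    ring
  have hdeg : Q.natDegree ≤ d := by
    rw [Polynomial.natDegree_le_iff_coeff_eq_zero]
    intro j hj
    rw [hQcoeff, if_neg (by omega), hps (N - j) (by omega), zero_mul, sub_zero]
  have hchoose : ((N.choose d : ZMod p)) ≠ 0 := by
    intro h0
    have hdvd' : p ∣ N.choose d := (ZMod.natCast_eq_zero_iff _ _).mp h0
    have hfac : p ∣ N.factorial := by
      refine hdvd'.trans ⟨d.factorial * (N - d).factorial, ?_⟩
      rw [← mul_assoc, Nat.choose_mul_factorial_mul_factorial (by omega : d ≤ N)]
    have := (Nat.Prime.dvd_factorial Fact.out).mp hfac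
    omega
  have hQd : Q.coeff d = s * (N.choose d : ZMod p) := by
    rw [hQcoeff, if_neg (by omega), show N - d = k from by omega, ← hsdef, sub_zero]
  have hQne : Q ≠ 0 := by
    intro h0
    apply mul_ne_zero hs hchoose
    rw [← hQd, h0, Polynomial.coeff_zero]
  -- each b in B is a root of multiplicity at least k+1
  have hdvd_b : ∀ b ∈ B, (Polynomial.X - Polynomial.C b) ^ (k + 1) ∣ Q := by
    intro b hb
    have hroots : ∀ i, (v i + b) ^ d = 1 := fun i => hroot _ (hvA i) b hb
    set R : Polynomial (ZMod p) :=
      (∑ i, Polynomial.C (c i) * (Polynomial.X + Polynomial.C (b + v i)) ^ N) - Polynomial.C s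
      with hRdef
    have hcomp : Q.comp (Polynomial.X + Polynomial.C b) = R := by
      rw [hQdef, hRdef, Polynomial.sub_comp, Polynomial.C_comp]
      congr 1
      rw [Polynomial.sum_comp]
      refine Finset.sum_congr rfl fun i _ => ?_
      rw [Polynomial.mul_comp, Polynomial.C_comp, Polynomial.pow_comp, Polynomial.add_comp,
        Polynomial.X_comp, Polynomial.C_comp, Polynomial.C_add]
      ring_nf
    have hRc : ∀ j, R.coeff j
        = (∑ i, c i * (b + v i) ^ (N - j)) * ((N.choose j : ZMod p)) - (if j = 0 then s else 0) := by
      intro j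
      rw [hRdef, Polynomial.coeff_sub, Polynomial.finset_sum_coeff, Polynomial.coeff_C]
      congr 1
      rw [Finset.sum_mul]
      refine Finset.sum_congr rfl fun i _ => ?_
      rw [Polynomial.coeff_C_mul, Polynomial.coeff_X_add_C_pow]
      ring
    have hX : Polynomial.X ^ (k + 1) ∣ R := by
      rw [Polynomial.X_pow_dvd_iff]
      intro j hj
      have hjk : j ≤ k := by omega
      have hpow : ∀ i : Fin m, (b + v i) ^ (N - j) = (v i + b) ^ (k - j) := by
        intro i
        rw [show N - j = d + (k - j) from by omega, pow_add, add_comm b (v i), hroots i, one_mul]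
      rw [hRc]
      simp only [hpow]
      rw [hsum_pow b (k - j) (by omega)]
      by_cases hj0 : j = 0
      · subst hj0
        rw [if_pos (by omega), if_pos rfl]
        simp
      · rw [if_neg (by omega), if_neg hj0, zero_mul, sub_zero]
    obtain ⟨T, hT⟩ := hX
    refine ⟨T.comp (Polynomial.X - Polynomial.C b), ?_⟩
    have h1 : Q = (Q.comp (Polynomial.X + Polynomial.C b)).comp
        (Polynomial.X - Polynomial.C b) := by
      rw [Polynomial.comp_assoc]
      simp
    rw [h1, hcomp, hT, Polynomial.mul_comp, Polynomial.pow_comp, Polynomial.X_comp]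
  -- count roots
  have hcount : ∀ b ∈ B, k + 1 ≤ Q.roots.count b := by
    intro b hb
    rw [Polynomial.count_roots]
    exact (Polynomial.le_rootMultiplicity_iff hQne).mpr (hdvd_b b hb)
  have hsub : B ⊆ Q.roots.toFinset := by
    intro b hb
    refine Multiset.mem_toFinset.mpr (Multiset.count_pos.mp ?_)
    have := hcount b hb
    omega
  calc m * B.card = ∑ _b ∈ B, (k + 1) := by
        rw [Finset.sum_const, smul_eq_mul, hmk]; ring
    _ ≤ ∑ b ∈ B, Q.roots.count b := Finset.sum_le_sum hcount
    _ ≤ ∑ x ∈ Q.roots.toFinset, Q.roots.count x := Finset.sum_le_sum_of_subset hsub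
    _ = Multiset.card Q.roots := Multiset.toFinset_sum_count_eq _
    _ ≤ Q.natDegree := Polynomial.card_roots' Q
    _ ≤ d := hdeg

theorem no_sumset_decomposition_prime_d
    (p : ℕ) (hp : p.Prime) (d : ℕ) (hdprime : d.Prime)
    (hdvd : d ∣ p - 1) (hlt : d < p - 1)
    (A B : Finset (ZMod p))
    (h : (↑(A + B) : Set (ZMod p)) = {z : ZMod p | z ^ d = 1}) :
    A.card = 1 ∨ B.card = 1 := by
  classical
  haveI : Fact p.Prime := ⟨hp⟩
  haveI : Fact d.Prime := ⟨hdprime⟩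
  have hd2 : 2 ≤ d := hdprime.two_le
  have hdp2 : 2 * d ≤ p - 1 := by
    obtain ⟨t, ht⟩ := hdvd
    have ht2 : 2 ≤ t := by
      rcases t with _ | _ | t
      · rw [Nat.mul_zero] at ht; omega
      · rw [Nat.mul_one] at ht; omega
      · omega
    calc 2 * d = d * 2 := Nat.mul_comm 2 d
      _ ≤ d * t := Nat.mul_le_mul_left d ht2
      _ = p - 1 := ht.symm
  have hdp : 2 * d < p := by
    have := hp.two_le; omega
  -- A + B is the finset of d-th roots of unity
  have hABeq : A + B = Polynomial.nthRootsFinset d (1 : ZMod p) := by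
    apply Finset.coe_injective
    rw [h]
    ext z
    simp [Polynomial.mem_nthRootsFinset (show 0 < d by omega) (1 : ZMod p), Set.mem_setOf_eq]
  -- a primitive d-th root of unity exists
  obtain ⟨u, hu⟩ := exists_prime_orderOf_dvd_card (G := (ZMod p)ˣ) d
    (by rw [ZMod.card_units p]; exact hdvd)
  have hprim : IsPrimitiveRoot ((u : ZMod p)) d :=
    IsPrimitiveRoot.coe_units_iff.mpr (hu ▸ IsPrimitiveRoot.orderOf u)
  have hcard : (A + B).card = d := by
    rw [hABeq, hprim.card_nthRootsFinset]
  -- A and B are nonempty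
  have hAne : A.Nonempty := by
    rcases A.eq_empty_or_nonempty with hA | hA
    · exfalso; rw [hA] at hcard; simp at hcard; omega
    · exact hA
  have hBne : B.Nonempty := by
    rcases B.eq_empty_or_nonempty with hB | hB
    · exfalso; rw [hB] at hcard; simp at hcard; omega
    · exact hB
  have hroot : ∀ a ∈ A, ∀ b ∈ B, (a + b) ^ d = 1 := by
    intro a ha b hb
    have : a + b ∈ (↑(A + B) : Set (ZMod p)) := by
      exact_mod_cast Finset.add_mem_add ha hb
    rw [h] at this
    exact this
  by_contra hcon
  push_neg at hcon
  obtain ⟨hA1, hB1⟩ := hcon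
  have hA2 : 2 ≤ A.card := by
    have := Finset.card_pos.mpr hAne; omega
  have hB2 : 2 ≤ B.card := by
    have := Finset.card_pos.mpr hBne; omega
  have hAd : A.card ≤ d := by
    have := Finset.card_le_card_add_right (s := A) hBne
    omega
  have hub : A.card * B.card ≤ d := hp_sumset_bound hd2 hdp A B hA2 hAd hroot
  have hlb : d ≤ A.card * B.card := by
    have := Finset.card_add_le (s := A) (t := B)
    omega
  have heq : A.card * B.card = d := le_antisymm hub hlb
  rcases (Nat.Prime.eq_one_or_self_of_dvd hdprime A.card ⟨B.card, heq.symm⟩) with h1 | h2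
  · omega
  · rw [h2] at heq
    have : B.card = 1 := Nat.eq_of_mul_eq_mul_left (by omega) (heq.trans (mul_one d).symm)
    omega
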